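/- Let n ≥ 5 and n/(n-4) < p < (n+4)/(n-4), and set C_{p,n} = K₀(p,n)^{1/(p-1)}. Then the function u(x) = C_{p,n} |x|^{-4/(p-1)} is a positive C⁴ function on ℝⁿ\{0} satisfying Δ²u(x) = u(x)^p for all x ∈ ℝⁿ\{0}. -/

import Mathlib

open MeasureTheory Metric Filter

/-- The Euclidean Laplacian `Δu` of `u : ℝⁿ → ℝ`, computed as the trace of the second
derivative: `Δu(x) = ∑ i, ∂²u/∂xᵢ²(x)`. -/
noncomputable def lap {n : ℕ} (u : EuclideanSpace ℝ (Fin n) → ℝ) :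
    EuclideanSpace ℝ (Fin n) → ℝ :=
  fun x => ∑ i : Fin n,
    iteratedFDeriv ℝ 2 u x ![EuclideanSpace.single i 1, EuclideanSpace.single i 1]

/-- The biharmonic operator `Δ²u = Δ(Δu)`. -/
noncomputable def bilap {n : ℕ} (u : EuclideanSpace ℝ (Fin n) → ℝ) :
    EuclideanSpace ℝ (Fin n) → ℝ :=
  lap (lap u)

/-- The constant `K₀(p,n)`. -/
noncomputable def K0 (n : ℕ) (p : ℝ) : ℝ :=
  8 / (p - 1) ^ 4 *
    (((n : ℝ) - 2) * ((n : ℝ) - 4) * (p - 1) ^ 3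
      + 2 * ((n : ℝ) ^ 2 - 10 * (n : ℝ) + 20) * (p - 1) ^ 2
      - 16 * ((n : ℝ) - 4) * (p - 1) + 32)

section Aux

lemma key_rpow (s : ℝ) {n : ℕ} (y : EuclideanSpace ℝ (Fin n)) :
    ((‖y‖ ^ 2 : ℝ)) ^ (s / 2) = ‖y‖ ^ s := by
  rw [← Real.rpow_natCast ‖y‖ 2, ← Real.rpow_mul (norm_nonneg y)]
  norm_num
  congr 1
  ring

lemma radial_hasFDerivAt {n : ℕ} (c s : ℝ) {x : EuclideanSpace ℝ (Fin n)} (hx : x ≠ 0) :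
    HasFDerivAt (fun y : EuclideanSpace ℝ (Fin n) => c * ‖y‖ ^ s)
      ((c * s * ‖x‖ ^ (s - 2)) • innerSL ℝ x) x := by
  have hnorm : (0:ℝ) < ‖x‖ := norm_pos_iff.mpr hx
  have h1 : HasFDerivAt (fun y : EuclideanSpace ℝ (Fin n) => (‖y‖ ^ 2 : ℝ))
      (2 • innerSL ℝ x) x :=
    (hasStrictFDerivAt_norm_sq x).hasFDerivAt
  have h2 : HasDerivAt (fun t : ℝ => t ^ (s / 2))
      (s / 2 * ((‖x‖ : ℝ) ^ 2) ^ (s / 2 - 1)) ((‖x‖ : ℝ) ^ 2) :=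
    Real.hasDerivAt_rpow_const (Or.inl (by positivity))
  have h3 := (h2.comp_hasFDerivAt x h1).const_mul c
  have hfun : (fun y : EuclideanSpace ℝ (Fin n) =>
        c * ((fun t : ℝ => t ^ (s / 2)) ∘ fun y : EuclideanSpace ℝ (Fin n) => (‖y‖ ^ 2 : ℝ)) y)
      = fun y : EuclideanSpace ℝ (Fin n) => c * ‖y‖ ^ s := by
    funext y; simp [Function.comp, key_rpow]
  rw [hfun] at h3
  refine h3.congr_fderiv ?_
  have hexp : (((‖x‖ : ℝ)) ^ 2) ^ (s / 2 - 1) = ‖x‖ ^ (s - 2) := by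
    rw [← Real.rpow_natCast ‖x‖ 2, ← Real.rpow_mul (norm_nonneg x)]
    congr 1; ring
  ext v
  simp [hexp, smul_smul]
  ring

lemma lap_congr {n : ℕ} {f g : EuclideanSpace ℝ (Fin n) → ℝ} {x : EuclideanSpace ℝ (Fin n)}
    (h : f =ᶠ[nhds x] g) : lap f x = lap g x := by
  refine Finset.sum_congr rfl fun i _ => ?_
  rw [iteratedFDeriv_two_apply, iteratedFDeriv_two_apply, h.fderiv.fderiv_eq]

lemma lap_radial {n : ℕ} (c s : ℝ) {x : EuclideanSpace ℝ (Fin n)} (hx : x ≠ 0) :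
    lap (fun y : EuclideanSpace ℝ (Fin n) => c * ‖y‖ ^ s) x
      = c * (s * (s + (n : ℝ) - 2)) * ‖x‖ ^ (s - 2) := by
  have hnorm : (0:ℝ) < ‖x‖ := norm_pos_iff.mpr hx
  set f : EuclideanSpace ℝ (Fin n) → ℝ := fun y => c * ‖y‖ ^ s with hf
  have hg' : HasFDerivAt (fun y : EuclideanSpace ℝ (Fin n) => c * s * ‖y‖ ^ (s - 2))
      ((c * s * (s - 2) * ‖x‖ ^ (s - 2 - 2)) • innerSL ℝ x) x :=
    radial_hasFDerivAt (n := n) (c * s) (s - 2) hx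
  have hL : HasFDerivAt
      (fun y : EuclideanSpace ℝ (Fin n) => (innerSL ℝ y : EuclideanSpace ℝ (Fin n) →L[ℝ] ℝ))
      (innerSL ℝ : EuclideanSpace ℝ (Fin n) →L[ℝ] EuclideanSpace ℝ (Fin n) →L[ℝ] ℝ) x :=
    (innerSL ℝ : EuclideanSpace ℝ (Fin n) →L[ℝ] EuclideanSpace ℝ (Fin n) →L[ℝ] ℝ).hasFDerivAt
  have hφ := hg'.smul hL
  have hev : fderiv ℝ f =ᶠ[nhds x]
      fun y : EuclideanSpace ℝ (Fin n) =>
        (c * s * ‖y‖ ^ (s - 2)) • (innerSL ℝ y : EuclideanSpace ℝ (Fin n) →L[ℝ] ℝ) := by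
    filter_upwards [IsOpen.mem_nhds isOpen_compl_singleton hx] with y hy
    exact (radial_hasFDerivAt c s hy).fderiv
  have h2 := (hφ.congr_of_eventuallyEq hev).fderiv
  have hi : ∀ i : Fin n,
      iteratedFDeriv ℝ 2 f x ![EuclideanSpace.single i 1, EuclideanSpace.single i 1]
        = c * s * (s - 2) * ‖x‖ ^ (s - 2 - 2) * (x i * x i) + c * s * ‖x‖ ^ (s - 2) := by
    intro i
    rw [iteratedFDeriv_two_apply, h2]
    simp [ContinuousLinearMap.add_apply, ContinuousLinearMap.smul_apply,
      ContinuousLinearMap.smulRight_apply, innerSL_apply_apply,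
      EuclideanSpace.inner_single_right, EuclideanSpace.inner_single_left, EuclideanSpace.single_apply]
    erw [innerSL_apply_apply, EuclideanSpace.inner_single_left]
    simp
    ring
  unfold lap
  simp only [hi]
  rw [Finset.sum_add_distrib, ← Finset.mul_sum, Finset.sum_const, Finset.card_univ,
    Fintype.card_fin, nsmul_eq_mul]
  have hsum : ∑ i : Fin n, x i * x i = ‖x‖ ^ (2:ℕ) := by
    rw [← real_inner_self_eq_norm_sq, PiLp.inner_apply]
    simp [RCLike.inner_apply, sq]
  rw [hsum]
  have hpow : ‖x‖ ^ (s - 2 - 2) * ‖x‖ ^ (2:ℕ) = ‖x‖ ^ (s - 2) := by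
    rw [← Real.rpow_natCast ‖x‖ 2, ← Real.rpow_add hnorm]
    norm_num
  rw [mul_assoc (c * s * (s - 2)), hpow]
  ring

lemma radial_contDiffAt {n : ℕ} (c s : ℝ) {x : EuclideanSpace ℝ (Fin n)} (hx : x ≠ 0)
    (m : WithTop ℕ∞) :
    ContDiffAt ℝ m (fun y : EuclideanSpace ℝ (Fin n) => c * ‖y‖ ^ s) x := by
  have hnorm : (0:ℝ) < ‖x‖ := norm_pos_iff.mpr hx
  have h1 : ContDiffAt ℝ m (fun y : EuclideanSpace ℝ (Fin n) => (‖y‖ ^ 2 : ℝ)) x :=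
    (contDiff_norm_sq ℝ).contDiffAt
  have h2 : ContDiffAt ℝ m (fun t : ℝ => t ^ (s / 2)) ((‖x‖ : ℝ) ^ 2) :=
    Real.contDiffAt_rpow_const_of_ne (by positivity)
  have h4 : ContDiffAt ℝ m
      (fun y : EuclideanSpace ℝ (Fin n) => c * ((‖y‖ ^ 2 : ℝ) ^ (s / 2))) x :=
    contDiffAt_const.mul (by exact h2.comp x h1)
  simp only [key_rpow] at h4
  exact h4

end Aux

/-- The function `u(x) = K₀(p,n)^{1/(p-1)} |x|^{-4/(p-1)}` is a positive
`C⁴` solution of `Δ²u = u^p` on `ℝⁿ \ {0}`. -/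
theorem stmt_14 (n : ℕ) (hn : 5 ≤ n) (p : ℝ)
    (hp1 : (n : ℝ) / ((n : ℝ) - 4) < p) (hp2 : p < ((n : ℝ) + 4) / ((n : ℝ) - 4))
    (u : EuclideanSpace ℝ (Fin n) → ℝ)
    (hu : ∀ x : EuclideanSpace ℝ (Fin n),
      u x = K0 n p ^ ((1 : ℝ) / (p - 1)) * ‖x‖ ^ (-((4 : ℝ) / (p - 1)))) :
    (∀ x : EuclideanSpace ℝ (Fin n), x ≠ 0 → 0 < u x) ∧
    ContDiffOn ℝ 4 u {(0 : EuclideanSpace ℝ (Fin n))}ᶜ ∧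
    ∀ x : EuclideanSpace ℝ (Fin n), x ≠ 0 → bilap u x = u x ^ p := by
  have hn4 : (4:ℝ) < (n:ℝ) := by exact_mod_cast (by omega : 4 < n)
  have hn4' : (0:ℝ) < (n:ℝ) - 4 := by linarith
  have hp1' : 1 < p := by
    have h : (1:ℝ) < (n : ℝ) / ((n:ℝ) - 4) := (one_lt_div hn4').mpr (by linarith)
    linarith
  have hpm : (0:ℝ) < p - 1 := by linarith
  have hpne : p - 1 ≠ 0 := ne_of_gt hpm
  set s : ℝ := -((4:ℝ) / (p - 1)) with hs
  set C : ℝ := K0 n p ^ ((1:ℝ) / (p - 1)) with hC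
  have hufun : u = fun y : EuclideanSpace ℝ (Fin n) => C * ‖y‖ ^ s := funext hu
  have ha : (4:ℝ) / (p - 1) < (n:ℝ) - 4 := by
    rw [div_lt_iff₀ hpm]
    have h2 := (div_lt_iff₀ hn4').mp hp1
    nlinarith
  have ha0 : (0:ℝ) < 4 / (p - 1) := by positivity
  have hK0eq : K0 n p = (4 / (p-1)) * (4 / (p-1) + 2) * ((n:ℝ) - 2 - 4 / (p-1))
      * ((n:ℝ) - 4 - 4 / (p-1)) := by
    unfold K0; field_simp; ring
  have hK0 : 0 < K0 n p := by
    rw [hK0eq]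
    have h1 : (0:ℝ) < (n:ℝ) - 4 - 4 / (p-1) := by linarith
    have h2 : (0:ℝ) < (n:ℝ) - 2 - 4 / (p-1) := by linarith
    have h3 : (0:ℝ) < 4 / (p-1) + 2 := by linarith
    exact mul_pos (mul_pos (mul_pos ha0 h3) h2) h1
  have hCpos : 0 < C := Real.rpow_pos_of_pos hK0 _
  refine ⟨?_, ?_, ?_⟩
  · intro x hx
    rw [hu x]
    exact mul_pos hCpos (Real.rpow_pos_of_pos (norm_pos_iff.mpr hx) _)
  · rw [hufun]
    intro x hx
    exact (radial_contDiffAt C s hx 4).contDiffWithinAt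
  · intro x hx
    have hnorm : (0:ℝ) < ‖x‖ := norm_pos_iff.mpr hx
    have hlap : lap u =ᶠ[nhds x]
        fun y : EuclideanSpace ℝ (Fin n) => (C * (s * (s + (n:ℝ) - 2))) * ‖y‖ ^ (s - 2) := by
      filter_upwards [IsOpen.mem_nhds isOpen_compl_singleton hx] with y hy
      rw [hufun]
      exact lap_radial C s hy
    have hbl : bilap u x = (C * (s * (s + (n:ℝ) - 2))) * ((s - 2) * ((s - 2) + (n:ℝ) - 2))
        * ‖x‖ ^ (s - 2 - 2) := by
      show lap (lap u) x = _
      rw [lap_congr hlap, lap_radial _ _ hx]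
    have hexp : s * p = s - 4 := by
      rw [hs]; field_simp; ring
    have hrhs : u x ^ p = (C * K0 n p) * ‖x‖ ^ (s - 4) := by
      rw [hu x, Real.mul_rpow hCpos.le (Real.rpow_nonneg (norm_nonneg x) _),
        ← Real.rpow_mul (norm_nonneg x), ← Real.rpow_mul hK0.le]
      have h1 : (1:ℝ) / (p - 1) * p = 1 / (p - 1) + 1 := by field_simp; ring
      rw [h1, Real.rpow_add hK0, Real.rpow_one, hexp]
    rw [hbl, hrhs]
    have hconst : (s * (s + (n:ℝ) - 2)) * ((s - 2) * ((s - 2) + (n:ℝ) - 2)) = K0 n p := by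
      rw [hs]; unfold K0; field_simp; ring
    have h42 : s - 2 - 2 = s - 4 := by ring
    rw [h42, ← hconst]
    ring
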